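/- Let r ≥ 1 be an integer, H an r-graph on a nonempty finite vertex set V, p ∈ (0,1], and ε ∈ (0,1]. Let 𝒳 = {X₁,...,X_r} be a family of pairwise disjoint nonempty subsets of V, and suppose there exist X_i^1 ⊆ X_i with |X_i^1| ≥ ε·|X_i| for each i = 1,...,r such that, setting 𝒳^1 = {X₁^1,...,X_r^1}, one has |d^p_H(𝒳^1) − d^p_H(𝒳)| > ε. Set X_i^2 = X_i ∖ X_i^1 and, for each j = (j₁,...,j_r) ∈ {1,2}^r, let 𝒳_j = {X₁^{j₁},...,X_r^{j_r}} (with the convention that ℰ^p_H(𝒳_j) = 0 if some X_i^{j_i} is empty). Then ∑_{j ∈ {1,2}^r} ℰ^p_H(𝒳_j) ≥ ℰ^p_H(𝒳) + α(𝒳)·ε^{r+2}. -/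

import Mathlib

open scoped Classical

/-- `π(𝒳) = ∏ i, |X i|`. -/
noncomputable def piX {α : Type*} {r : ℕ} (X : Fin r → Finset α) : ℝ :=
  ∏ i, ((X i).card : ℝ)

/-- `α(𝒳) = π(𝒳) / |V|^r`. -/
noncomputable def alphaX {α : Type*} [Fintype α] {r : ℕ} (X : Fin r → Finset α) : ℝ :=
  piX X / (Fintype.card α : ℝ) ^ r

/-- `e_H(𝒳)`: the number of edges of `H` with exactly one vertex in each `X i`. -/
noncomputable def eX {α : Type*} [DecidableEq α] {r : ℕ}
    (H : Finset (Finset α)) (X : Fin r → Finset α) : ℕ :=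
  (H.filter fun e => ∀ i, (e ∩ X i).card = 1).card

/-- `d^p_H(𝒳) = e_H(𝒳) / (p · π(𝒳))`. -/
noncomputable def dX {α : Type*} [DecidableEq α] {r : ℕ}
    (p : ℝ) (H : Finset (Finset α)) (X : Fin r → Finset α) : ℝ :=
  (eX H X : ℝ) / (p * piX X)

/-- `ℰ^p_H(𝒳) = α(𝒳) · (d^p_H(𝒳))²`.  (If some `X i` is empty this vanishes, which is
the convention `ℰ^p_H(𝒳_j) = 0` for degenerate tuples.) -/
noncomputable def enX {α : Type*} [Fintype α] [DecidableEq α] {r : ℕ}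
    (p : ℝ) (H : Finset (Finset α)) (X : Fin r → Finset α) : ℝ :=
  alphaX X * (dX p H X) ^ 2

/-- The refinement of `X` by `X1`, indexed by `j : Fin r → Fin 2`. -/
noncomputable def refX {α : Type*} [DecidableEq α] {r : ℕ} (X X1 : Fin r → Finset α)
    (j : Fin r → Fin 2) : Fin r → Finset α :=
  fun i => if j i = 0 then X1 i else X i \ X1 i

lemma eX_eq_zero' {α : Type*} [DecidableEq α] {r : ℕ} (H : Finset (Finset α))
    (X : Fin r → Finset α) (i : Fin r) (h : X i = ∅) : eX H X = 0 := by
  unfold eX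
  rw [Finset.card_eq_zero, Finset.filter_eq_empty_iff]
  intro e _ hP
  have := hP i
  rw [h] at this
  simp at this

lemma eX_le_sum' {α : Type*} [DecidableEq α] {r : ℕ} (H : Finset (Finset α))
    (X X1 : Fin r → Finset α) (hsub : ∀ i, X1 i ⊆ X i) :
    eX H X ≤ ∑ j : Fin r → Fin 2, eX H (refX X X1 j) := by
  unfold eX refX
  calc (H.filter fun e => ∀ i, (e ∩ X i).card = 1).card
      ≤ (Finset.univ.biUnion fun j : Fin r → Fin 2 =>
          H.filter fun e => ∀ i,
            (e ∩ (if j i = 0 then X1 i else X i \ X1 i)).card = 1).card := by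
        apply Finset.card_le_card
        intro e he
        simp only [Finset.mem_filter] at he
        obtain ⟨heH, hP⟩ := he
        simp only [Finset.mem_biUnion, Finset.mem_univ, Finset.mem_filter, true_and]
        refine ⟨fun i => if (e ∩ X1 i).card = 1 then 0 else 1, heH, fun i => ?_⟩
        by_cases h : (e ∩ X1 i).card = 1
        · simp [h]
        · have hle : (e ∩ X1 i).card ≤ (e ∩ X i).card :=
            Finset.card_le_card (Finset.inter_subset_inter_left (hsub i))
          have h0 : (e ∩ X1 i).card = 0 := by
            have := hP i; omega
          have hempty : e ∩ X1 i = ∅ := Finset.card_eq_zero.mp h0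
          have hne : ∀ a, a ∈ e → a ∉ X1 i := by
            intro a hae ha1
            have : a ∈ e ∩ X1 i := Finset.mem_inter.mpr ⟨hae, ha1⟩
            simp [hempty] at this
          have heq : e ∩ (X i \ X1 i) = e ∩ X i := by
            ext a
            simp only [Finset.mem_inter, Finset.mem_sdiff]
            exact ⟨fun ⟨h1, h2, _⟩ => ⟨h1, h2⟩, fun ⟨h1, h2⟩ => ⟨h1, h2, hne a h1⟩⟩
          simp [h, heq, hP i]
    _ ≤ _ := Finset.card_biUnion_le

/-- **Energy boost from an irregular witness.** If `X₁^1 ⊆ X₁, …, X_r^1 ⊆ X_r` with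
`|X_i^1| ≥ ε |X_i|` witness irregularity, i.e. `|d(𝒳^1) - d(𝒳)| > ε`, then the energy
of the refinement by `X_i^1, X_i^2 = X_i \ X_i^1` gains at least `α(𝒳) ε^{r+2}`. -/
theorem energy_boost {α : Type*} [Fintype α] [DecidableEq α] [Nonempty α]
    (r : ℕ) (hr : 1 ≤ r) (H : Finset (Finset α)) (hH : ∀ e ∈ H, e.card = r)
    (p : ℝ) (hp0 : 0 < p) (hp1 : p ≤ 1) (ε : ℝ) (hε0 : 0 < ε) (hε1 : ε ≤ 1)
    (X : Fin r → Finset α) (hXne : ∀ i, (X i).Nonempty)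
    (hXdisj : ∀ i j, i ≠ j → Disjoint (X i) (X j))
    (X1 : Fin r → Finset α) (hsub : ∀ i, X1 i ⊆ X i)
    (hX1size : ∀ i, ε * ((X i).card : ℝ) ≤ ((X1 i).card : ℝ))
    (hirreg : ε < |dX p H X1 - dX p H X|) :
    enX p H X + alphaX X * ε ^ (r + 2) ≤
      ∑ j : Fin r → Fin 2,
        enX p H (fun i => if j i = 0 then X1 i else X i \ X1 i) := by
  classical
  have hgoalrw : (∑ j : Fin r → Fin 2,
      enX p H (fun i => if j i = 0 then X1 i else X i \ X1 i))
      = ∑ j : Fin r → Fin 2, enX p H (refX X X1 j) := rfl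
  rw [hgoalrw]
  have hn0 : (0:ℝ) < (Fintype.card α : ℝ) := by exact_mod_cast Fintype.card_pos
  have hNpos : (0:ℝ) < (Fintype.card α : ℝ) ^ r := pow_pos hn0 r
  have hpiXpos : 0 < piX X := by
    unfold piX
    exact Finset.prod_pos fun i _ => by exact_mod_cast (hXne i).card_pos
  have hpiXnonneg : ∀ Z : Fin r → Finset α, 0 ≤ piX Z := by
    intro Z; unfold piX; positivity
  have hdnonneg : ∀ Z : Fin r → Finset α, 0 ≤ dX p H Z := by
    intro Z
    exact div_nonneg (Nat.cast_nonneg _) (mul_nonneg hp0.le (hpiXnonneg Z))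
  have hanonneg : ∀ Z : Fin r → Finset α, 0 ≤ alphaX Z := by
    intro Z
    exact div_nonneg (hpiXnonneg Z) hNpos.le
  -- the π's of the refinement sum to π(X)
  have hpisum : ∑ j : Fin r → Fin 2, piX (refX X X1 j) = piX X := by
    unfold piX refX
    have key := Finset.prod_univ_sum (fun _ : Fin r => (Finset.univ : Finset (Fin 2)))
        (fun i k => (((if k = 0 then X1 i else X i \ X1 i)).card : ℝ))
    rw [Fintype.piFinset_univ] at key
    rw [← key]
    refine Finset.prod_congr rfl fun i _ => ?_
    rw [Fin.sum_univ_two]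
    simp only [if_pos rfl, if_neg (by decide : (1 : Fin 2) ≠ 0)]
    have := Finset.card_sdiff_add_card_eq_card (hsub i)
    push_cast [← this]
    ring
  have hasum : ∑ j : Fin r → Fin 2, alphaX (refX X X1 j) = alphaX X := by
    unfold alphaX
    rw [← Finset.sum_div, hpisum]
  -- α(Z) · d(Z) = e(Z) / (p N)  for every tuple Z
  have had : ∀ Z : Fin r → Finset α,
      alphaX Z * dX p H Z = (eX H Z : ℝ) / (p * (Fintype.card α : ℝ) ^ r) := by
    intro Z
    by_cases hz : ∃ i, Z i = ∅
    · obtain ⟨i, hi⟩ := hz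
      have he : eX H Z = 0 := eX_eq_zero' H Z i hi
      unfold alphaX dX
      rw [he]
      simp
    · push_neg at hz
      have hprod : (0:ℝ) < piX Z := by
        unfold piX
        exact Finset.prod_pos fun i _ => by
          exact_mod_cast (hz i).card_pos
      unfold alphaX dX
      field_simp
  -- edge-count inequality, in α·d form
  have hT : alphaX X * dX p H X ≤
      ∑ j : Fin r → Fin 2, alphaX (refX X X1 j) * dX p H (refX X X1 j) := by
    rw [had X]
    have hrw : ∑ j : Fin r → Fin 2, alphaX (refX X X1 j) * dX p H (refX X X1 j)
        = (∑ j : Fin r → Fin 2, (eX H (refX X X1 j) : ℝ)) /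
            (p * (Fintype.card α : ℝ) ^ r) := by
      rw [Finset.sum_div]
      exact Finset.sum_congr rfl fun j _ => had (refX X X1 j)
    rw [hrw]
    gcongr
    exact_mod_cast eX_le_sum' H X X1 hsub
  -- the all-zero cell of the refinement is X1
  have hY0 : refX X X1 (fun _ => 0) = X1 := funext fun i => if_pos rfl
  -- α(X1) ≥ ε^r α(X)
  have hπ1 : ε ^ r * piX X ≤ piX X1 := by
    have heq : ε ^ r * piX X = ∏ i : Fin r, (ε * ((X i).card : ℝ)) := by
      unfold piX
      rw [Finset.prod_mul_distrib, Finset.prod_const, Finset.card_univ, Fintype.card_fin]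
    rw [heq]
    unfold piX
    exact Finset.prod_le_prod (fun i _ => mul_nonneg hε0.le (Nat.cast_nonneg _))
      (fun i _ => hX1size i)
  have hα1 : ε ^ r * alphaX X ≤ alphaX X1 := by
    unfold alphaX
    rw [mul_div_assoc']
    gcongr
  -- the deviation bound
  have hsq : ε ^ 2 ≤ (dX p H X1 - dX p H X) ^ 2 := by
    have h1 : ε ^ 2 ≤ |dX p H X1 - dX p H X| ^ 2 :=
      pow_le_pow_left₀ hε0.le hirreg.le 2
    rwa [sq_abs] at h1
  have hdev : ε ^ (r + 2) * alphaX X ≤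
      alphaX X1 * (dX p H X1 - dX p H X) ^ 2 := by
    have h2 := mul_le_mul hα1 hsq (by positivity) (hanonneg X1)
    calc ε ^ (r + 2) * alphaX X = (ε ^ r * alphaX X) * ε ^ 2 := by ring
      _ ≤ alphaX X1 * (dX p H X1 - dX p H X) ^ 2 := h2
  -- variance term bound
  have hvar : alphaX X1 * (dX p H X1 - dX p H X) ^ 2
      ≤ ∑ j : Fin r → Fin 2,
          alphaX (refX X X1 j) * (dX p H (refX X X1 j) - dX p H X) ^ 2 := by
    have h3 := Finset.single_le_sum
      (f := fun j : Fin r → Fin 2 =>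
        alphaX (refX X X1 j) * (dX p H (refX X X1 j) - dX p H X) ^ 2)
      (fun j _ => mul_nonneg (hanonneg _) (sq_nonneg _))
      (Finset.mem_univ (fun _ => (0 : Fin 2)))
    simpa [hY0] using h3
  -- variance decomposition
  have hsum : ∑ j : Fin r → Fin 2, alphaX (refX X X1 j) * dX p H (refX X X1 j) ^ 2
      = (∑ j : Fin r → Fin 2,
          alphaX (refX X X1 j) * (dX p H (refX X X1 j) - dX p H X) ^ 2)
        + 2 * dX p H X *
            (∑ j : Fin r → Fin 2, alphaX (refX X X1 j) * dX p H (refX X X1 j))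
        - dX p H X ^ 2 * alphaX X := by
    rw [← hasum, Finset.mul_sum, Finset.mul_sum, ← Finset.sum_add_distrib,
      ← Finset.sum_sub_distrib]
    exact Finset.sum_congr rfl fun j _ => by ring
  have hd0 := hdnonneg X
  have h2dT : dX p H X * (alphaX X * dX p H X) ≤
      dX p H X * (∑ j : Fin r → Fin 2, alphaX (refX X X1 j) * dX p H (refX X X1 j)) :=
    mul_le_mul_of_nonneg_left hT hd0
  unfold enX
  linarith [hsum, hvar, hdev, h2dT]
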